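/- Let S be a real random variable with S ≥ 0 a.s. and suppose the anti-concentration bound P(|S − ξ| ≤ κ) ≤ 4κ(E[S] + 1) holds for all ξ ∈ ℝ and κ > 0. Let T_n = S + R_n where R_n → 0 in probability with rate o_P(κ_n) for a sequence κ_n → 0 with κ_n·(E[S]+1) → 0. If c is such that P(S ≤ c) = 1 − β, then liminf_n P(T_n ≤ c) ≥ 1 − β. -/
import Mathlib


open MeasureTheory Filter

/-- Coverage lower bound: if `S ≥ 0` satisfies the anti-concentration bound
`P(|S − ξ| ≤ κ) ≤ 4κ(E[S]+1)`, `T_n = S + R_n` with `R_n = o_P(κ_n)` for a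
sequence `κ_n → 0` with `κ_n(E[S]+1) → 0`, and `P(S ≤ c) = 1 − β`, then
`liminf_n P(T_n ≤ c) ≥ 1 − β`. -/
theorem coverage_liminf {Ω : Type*} [MeasurableSpace Ω]
    (μ : Measure Ω) [IsProbabilityMeasure μ]
    (S : Ω → ℝ) (hS0 : ∀ᵐ ω ∂μ, 0 ≤ S ω) (hSint : Integrable S μ)
    (hanti : ∀ ξ : ℝ, ∀ κ : ℝ, 0 < κ →
      (μ {ω | |S ω - ξ| ≤ κ}).toReal ≤ 4 * κ * ((∫ ω, S ω ∂μ) + 1))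
    (R : ℕ → Ω → ℝ) (κn : ℕ → ℝ) (hκpos : ∀ n, 0 < κn n)
    (hκ0 : Tendsto κn atTop (nhds 0))
    (hκE : Tendsto (fun n => κn n * ((∫ ω, S ω ∂μ) + 1)) atTop (nhds 0))
    (hR : Tendsto (fun n => (μ {ω | κn n < |R n ω|}).toReal) atTop (nhds 0))
    (c β : ℝ) (hβ : β ∈ Set.Ioo (0 : ℝ) 1)
    (hc : (μ {ω | S ω ≤ c}).toReal = 1 - β) :
    (1 - β : ℝ) ≤ atTop.liminf fun n => (μ {ω | S ω + R n ω ≤ c}).toReal := by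
  set E := (∫ ω, S ω ∂μ) + 1 with hE
  set f : ℕ → ℝ := fun n => (1 - β) - (4 * (κn n * E) + (μ {ω | κn n < |R n ω|}).toReal)
    with hf
  have key : ∀ n, f n ≤ (μ {ω | S ω + R n ω ≤ c}).toReal := by
    intro n
    have hsub : {ω | S ω ≤ c} ⊆ {ω | S ω + R n ω ≤ c} ∪
        ({ω | |S ω - c| ≤ κn n} ∪ {ω | κn n < |R n ω|}) := by
      intro ω hω
      by_cases h1 : |S ω - c| ≤ κn n
      · exact Or.inr (Or.inl h1)
      by_cases h2 : κn n < |R n ω|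
      · exact Or.inr (Or.inr h2)
      left
      push_neg at h1 h2
      have habs : |S ω - c| = c - S ω := by
        rw [abs_of_nonpos (by simp only [Set.mem_setOf_eq] at hω; linarith)]; ring
      have hR2 := (abs_le.mp h2).2
      simp only [Set.mem_setOf_eq] at hω ⊢
      rw [habs] at h1
      linarith
    have hle : μ {ω | S ω ≤ c} ≤ μ {ω | S ω + R n ω ≤ c} +
        (μ {ω | |S ω - c| ≤ κn n} + μ {ω | κn n < |R n ω|}) :=
      (measure_mono hsub).trans ((measure_union_le _ _).trans
        (by gcongr; exact measure_union_le _ _))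
    have hne : μ {ω | S ω + R n ω ≤ c} +
        (μ {ω | |S ω - c| ≤ κn n} + μ {ω | κn n < |R n ω|}) ≠ ⊤ := by
      simp [ENNReal.add_ne_top, measure_ne_top]
    have htr := ENNReal.toReal_mono hne hle
    rw [ENNReal.toReal_add (measure_ne_top _ _) (by simp [ENNReal.add_ne_top, measure_ne_top]),
      ENNReal.toReal_add (measure_ne_top _ _) (measure_ne_top _ _), hc] at htr
    have hab := hanti c (κn n) (hκpos n)
    simp only [hf]
    rw [hE] at hab ⊢
    linarith
  have hlim : Tendsto f atTop (nhds (1 - β)) := by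
    have h0 : Tendsto (fun n => 4 * (κn n * E) + (μ {ω | κn n < |R n ω|}).toReal)
        atTop (nhds (4 * 0 + 0)) := ((hκE.const_mul 4).add hR)
    simpa using tendsto_const_nhds.sub h0
  have hbddf : IsBoundedUnder (· ≥ ·) atTop f := hlim.isBoundedUnder_ge
  have hcobg : IsCoboundedUnder (· ≥ ·) atTop
      (fun n => (μ {ω | S ω + R n ω ≤ c}).toReal) :=
    (isBoundedUnder_of ⟨1, fun n => by
      simpa using ENNReal.toReal_mono ENNReal.one_ne_top
        (prob_le_one (μ := μ))⟩ : IsBoundedUnder (· ≤ ·) atTop _).isCoboundedUnder_ge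
  calc (1 - β : ℝ) = atTop.liminf f := hlim.liminf_eq.symm
    _ ≤ atTop.liminf fun n => (μ {ω | S ω + R n ω ≤ c}).toReal :=
      liminf_le_liminf (Eventually.of_forall key) hbddf hcobg
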